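/- Let N ∈ ℕ, let z ∈ ℂ with |z| = 1, let δ > 0 and 0 < ε ≤ δ/2, and let z₁,…,z_N and z̆₁,…,z̆_N be complex numbers with |z_n − z̆_n| ≤ ε, |z_n − z| ≥ δ and |z̆_n| ≥ 1 for all 1 ≤ n ≤ N. Then exp(−s) ≤ ∏_{n=1}^N |(1 − z/z̆_n)/(1 − z/z_n)| ≤ exp(s), where s = (2ε/δ)·Σ_{n=1}^N 1/|z̆_n|. -/

import Mathlib

open Complex Filter
open scoped ComplexConjugate Topology

noncomputable section

def cmvZeta (n : ℕ) (z : ℂ) : ℂ := if Odd n then z else 1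

def enorm2 (v : ℂ × ℂ) : ℝ := Real.sqrt (Norm.norm v.1 ^ 2 + Norm.norm v.2 ^ 2)

def IsJostSolution (α : ℕ → ℂ) (F : ℂ → ℕ → ℂ × ℂ) : Prop :=
  (∀ z : ℂ, ∃ M : ℝ, ∀ k : ℕ, enorm2 (F z k) ≤ M) ∧
  ∀ (z : ℂ) (k : ℕ),
    Summable (fun n : ℕ => Norm.norm (α (k + 1 + n) * cmvZeta (k + 1 + n) z * (F z (k + 1 + n)).2)) ∧
    Summable (fun n : ℕ => Norm.norm (z ^ n * conj (α (k + 1 + n)) * cmvZeta (k + 1) z * (F z (k + 1 + n)).1)) ∧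
    (F z k).1 = 1 - ∑' n : ℕ, α (k + 1 + n) * cmvZeta (k + 1 + n) z * (F z (k + 1 + n)).2 ∧
    (F z k).2 = - ∑' n : ℕ, z ^ n * conj (α (k + 1 + n)) * cmvZeta (k + 1) z * (F z (k + 1 + n)).1

def SuperExpDecay (γ C : ℝ) (α : ℕ → ℂ) : Prop :=
  ∀ n : ℕ, 1 ≤ n → Norm.norm (α n) ≤ C * Real.exp (-(n : ℝ) ^ γ)

def MemB0 (γ C Q : ℝ) (α : ℕ → ℂ) : Prop :=
  (∀ k : ℕ, 1 ≤ k → Norm.norm (α k) < 1) ∧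
  SuperExpDecay γ C α ∧
  1 / Q ≤ ∏' j : ℕ, (1 - Norm.norm (α (j + 1)))

def jostPi (F : ℂ → ℕ → ℂ × ℂ) (z : ℂ) : ℂ := (F z 0).1 - (F z 0).2

def HasZeroOrder (f : ℂ → ℂ) (w : ℂ) (m : ℕ) : Prop :=
  ∃ g : ℂ → ℂ, AnalyticAt ℂ g w ∧ g w ≠ 0 ∧ ∀ᶠ x in 𝓝 w, f x = (x - w) ^ m * g x

def CMVStep (α : ℕ → ℂ) (z : ℂ) (k : ℕ) (prev cur : ℂ × ℂ) : Prop :=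
  if Odd k then
    cur.1 = (α k * prev.1 + z * prev.2) / ((Real.sqrt (1 - Norm.norm (α k) ^ 2) : ℝ) : ℂ) ∧
    cur.2 = (prev.1 / z + conj (α k) * prev.2) / ((Real.sqrt (1 - Norm.norm (α k) ^ 2) : ℝ) : ℂ)
  else
    cur.1 = (conj (α k) * prev.1 + prev.2) / ((Real.sqrt (1 - Norm.norm (α k) ^ 2) : ℝ) : ℂ) ∧
    cur.2 = (prev.1 + α k * prev.2) / ((Real.sqrt (1 - Norm.norm (α k) ^ 2) : ℝ) : ℂ)

end

lemma key_estimate (z zn bz : ℂ) (hz : Norm.norm z = 1)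
    (δ ε : ℝ) (hδ : 0 < δ) (hε0 : 0 < ε) (hεδ : ε ≤ δ / 2)
    (hclose : Norm.norm (zn - bz) ≤ ε)
    (hfar : δ ≤ Norm.norm (zn - z))
    (hbig : 1 ≤ Norm.norm bz) :
    Real.exp (-(2 * ε / δ * (Norm.norm bz)⁻¹)) ≤
      Norm.norm ((1 - z / bz) / (1 - z / zn)) ∧
    Norm.norm ((1 - z / bz) / (1 - z / zn)) ≤
      Real.exp (2 * ε / δ * (Norm.norm bz)⁻¹) := by
  have hbz : bz ≠ 0 := by
    intro h; rw [h] at hbig; simp at hbig; linarith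
  have habs1 : Norm.norm (bz - zn) = Norm.norm (zn - bz) := by
    exact norm_sub_rev bz zn
  have h1 : Norm.norm bz ≤ Norm.norm (zn - bz) + Norm.norm zn := by
    calc Norm.norm bz = Norm.norm ((bz - zn) + zn) := by ring_nf
    _ ≤ Norm.norm (bz - zn) + Norm.norm zn := norm_add_le _ _
    _ = _ := by rw [habs1]
  have h2 : Norm.norm (zn - z) ≤ Norm.norm zn + 1 := by
    calc Norm.norm (zn - z) = Norm.norm (zn + (-z)) := by ring_nf
    _ ≤ Norm.norm zn + Norm.norm (-z) := norm_add_le _ _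
    _ = Norm.norm zn + 1 := by rw [norm_neg, hz]
  have hznpos : 0 < Norm.norm zn := by nlinarith
  have hzn0 : zn ≠ 0 := by
    intro h; rw [h] at hznpos; simp at hznpos
  have hznz : zn - z ≠ 0 := by
    intro h; rw [h] at hfar; simp at hfar; linarith
  have hden : (1 : ℂ) - z / zn ≠ 0 := by
    rw [sub_ne_zero]
    intro h
    have hzzn : z = zn := by rwa [eq_comm, div_eq_one_iff_eq hzn0] at h
    exact hznz (by rw [hzzn]; ring)
  set w : ℂ := z * (zn - bz) / ((zn - z) * bz) with hw_def
  have hid : (1 - z / bz) / (1 - z / zn) = 1 - w := by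
    rw [hw_def]
    field_simp
    ring
  set t : ℝ := ε / δ * (Norm.norm bz)⁻¹ with ht_def
  have hbzpos : (0:ℝ) < Norm.norm bz := by linarith
  have ht0 : 0 < t := by positivity
  have hbzinv : (Norm.norm bz)⁻¹ ≤ 1 := by
    rw [inv_le_one_iff₀]; right; exact hbig
  have ht2 : t ≤ 1 / 2 := by
    calc t ≤ ε / δ * 1 := by
            apply mul_le_mul_of_nonneg_left hbzinv (by positivity)
    _ = ε / δ := by ring
    _ ≤ 1 / 2 := by rw [div_le_div_iff₀ hδ (by norm_num)]; linarith
  have hw : Norm.norm w ≤ t := by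
    rw [hw_def, norm_div, norm_mul, norm_mul, hz, one_mul]
    calc Norm.norm (zn - bz) / (Norm.norm (zn - z) * Norm.norm bz)
        ≤ ε / (δ * Norm.norm bz) := by
          apply div_le_div₀ hε0.le hclose (by positivity)
          apply mul_le_mul_of_nonneg_right hfar hbzpos.le
    _ = t := by rw [ht_def]; ring
  have hlow : 1 - t ≤ Norm.norm (1 - w) := by
    have := norm_sub_norm_le (1:ℂ) w
    simp only [norm_one] at this
    linarith
  have hhigh : Norm.norm (1 - w) ≤ 1 + t := by
    have h5 : Norm.norm (1 - w) ≤ Norm.norm (1:ℂ) + Norm.norm (-w) := by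
      calc Norm.norm (1 - w) = Norm.norm (1 + (-w)) := by ring_nf
      _ ≤ _ := norm_add_le _ _
    rw [norm_neg, norm_one] at h5
    linarith
  have hexp2t : 2 * t + 1 ≤ Real.exp (2 * t) := Real.add_one_le_exp (2 * t)
  have hexppos := Real.exp_pos (2 * t)
  constructor
  · rw [hid]
    have hconst : 2 * ε / δ * (Norm.norm bz)⁻¹ = 2 * t := by rw [ht_def]; ring
    rw [hconst, Real.exp_neg]
    have hcancel : (Real.exp (2 * t))⁻¹ * Real.exp (2 * t) = 1 :=
      inv_mul_cancel₀ hexppos.ne'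
    have : (Real.exp (2 * t))⁻¹ ≤ 1 - t := by nlinarith
    linarith
  · rw [hid]
    have hconst : 2 * ε / δ * (Norm.norm bz)⁻¹ = 2 * t := by rw [ht_def]; ring
    rw [hconst]
    have h3 : t + 1 ≤ Real.exp t := Real.add_one_le_exp t
    have h4 : Real.exp t ≤ Real.exp (2 * t) := Real.exp_le_exp.2 (by linarith)
    linarith

theorem close_resonance_product_estimate (N : ℕ) (z : ℂ) (hz : Norm.norm z = 1)
    (δ ε : ℝ) (hδ : 0 < δ) (hε0 : 0 < ε) (hεδ : ε ≤ δ / 2)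
    (zs bzs : Fin N → ℂ)
    (hclose : ∀ n, Norm.norm (zs n - bzs n) ≤ ε)
    (hfar : ∀ n, δ ≤ Norm.norm (zs n - z))
    (hbig : ∀ n, 1 ≤ Norm.norm (bzs n)) :
    Real.exp (-(2 * ε / δ * ∑ n, (Norm.norm (bzs n))⁻¹)) ≤
        ∏ n, Norm.norm ((1 - z / bzs n) / (1 - z / zs n)) ∧
      ∏ n, Norm.norm ((1 - z / bzs n) / (1 - z / zs n)) ≤
        Real.exp (2 * ε / δ * ∑ n, (Norm.norm (bzs n))⁻¹) := by
  have key := fun n => key_estimate z (zs n) (bzs n) hz δ ε hδ hε0 hεδ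
    (hclose n) (hfar n) (hbig n)
  constructor
  · calc Real.exp (-(2 * ε / δ * ∑ n, (Norm.norm (bzs n))⁻¹))
        = ∏ n, Real.exp (-(2 * ε / δ * (Norm.norm (bzs n))⁻¹)) := by
          rw [← Real.exp_sum]
          congr 1
          rw [Finset.mul_sum, Finset.sum_neg_distrib]
    _ ≤ ∏ n, Norm.norm ((1 - z / bzs n) / (1 - z / zs n)) := by
          apply Finset.prod_le_prod (fun n _ => (Real.exp_pos _).le)
            (fun n _ => (key n).1)
  · calc ∏ n, Norm.norm ((1 - z / bzs n) / (1 - z / zs n))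
        ≤ ∏ n, Real.exp (2 * ε / δ * (Norm.norm (bzs n))⁻¹) := by
          apply Finset.prod_le_prod (fun n _ => norm_nonneg _)
            (fun n _ => (key n).2)
    _ = Real.exp (2 * ε / δ * ∑ n, (Norm.norm (bzs n))⁻¹) := by
          rw [← Real.exp_sum, Finset.mul_sum]
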